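/- Let G be a profinite group and U ≤ G an open subgroup which is (topologically) finitely presented. Then G is (topologically) finitely presented. -/

import Mathlib

/-! Basic notions about profinite groups: free profinite groups of finite rank,
topological finite generation and topological finite presentation. -/

/-- `s : Fin n → F` exhibits the profinite group `F` as the free profinite group on the
`n` letters `s 0, …, s (n-1)`: every map from the letters to a profinite group extends
uniquely to a continuous homomorphism. -/
def IsFreeProfiniteOn (F : Type) [Group F] [TopologicalSpace F] {n : ℕ} (s : Fin n → F) :
    Prop :=
  ∀ (H : Type) [Group H] [TopologicalSpace H] [IsTopologicalGroup H] [CompactSpace H]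
    [T2Space H] [TotallyDisconnectedSpace H] (f : Fin n → H),
    ∃! φ : F →* H, Continuous φ ∧ ∀ i, φ (s i) = f i

/-- A topological group is topologically finitely generated if some finitely generated
subgroup is dense. -/
def IsTopFinitelyGenerated (G : Type) [Group G] [TopologicalSpace G] : Prop :=
  ∃ S : Finset G, Dense ((Subgroup.closure (S : Set G) : Subgroup G) : Set G)

/-- A profinite group `G` is topologically finitely presented if there is a continuous
surjection `φ : F → G` from a free profinite group of finite rank such that `Ker φ` is
(topologically) finitely generated as a closed normal subgroup of `F`, i.e. `Ker φ` is the
closure of the normal subgroup generated by finitely many elements. -/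
def IsFinitelyPresentedProfinite (G : Type) [Group G] [TopologicalSpace G] : Prop :=
  ∃ (F : Type) (gF : Group F) (tF : TopologicalSpace F),
    ∃ _tg : @IsTopologicalGroup F tF gF,
    letI := gF; letI := tF; letI := _tg
    CompactSpace F ∧ T2Space F ∧ TotallyDisconnectedSpace F ∧
    ∃ (n : ℕ) (s : Fin n → F) (φ : F →* G),
      IsFreeProfiniteOn F s ∧ Continuous φ ∧ Function.Surjective φ ∧
      ∃ T : Finset F, (T : Set F) ⊆ (φ.ker : Set F) ∧
        (Subgroup.normalClosure (T : Set F)).topologicalClosure = φ.ker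



open Pointwise Topology

section ProfiniteBasics

variable {G : Type*} [Group G] [TopologicalSpace G] [IsTopologicalGroup G] [CompactSpace G]
  [T2Space G] [TotallyDisconnectedSpace G]

/-- In a profinite group, every neighborhood of 1 contains an open normal subgroup. -/
theorem exists_openNormalSubgroup_nhd {O : Set G} (hO : O ∈ nhds (1 : G)) :
    ∃ V : OpenNormalSubgroup G, (V : Set G) ⊆ O := by
  obtain ⟨W, hWclopen, hW1, hWO⟩ := isTopologicalBasis_isClopen.mem_nhds_iff.mp hO
  obtain ⟨V, hV⟩ := IsTopologicalGroup.exist_openNormalSubgroup_sub_clopen_nhds_of_one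
    hWclopen hW1
  exact ⟨V, hV.trans hWO⟩

/-- In a profinite group, only the identity lies in all open normal subgroups. -/
theorem eq_one_of_mem_all_openNormal {x : G}
    (h : ∀ V : OpenNormalSubgroup G, x ∈ V.toSubgroup) : x = 1 := by
  by_contra hx
  have : ({x}ᶜ : Set G) ∈ nhds (1 : G) :=
    (isOpen_compl_singleton).mem_nhds (by simpa using (Ne.symm hx))
  obtain ⟨V, hV⟩ := exists_openNormalSubgroup_nhd this
  exact hV (h V) rfl

/-- The quotient of a profinite group by a closed normal subgroup is totally disconnected. -/
theorem quotient_totallyDisconnected (N : Subgroup G) [N.Normal]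
    (hN : IsClosed (N : Set G)) : TotallyDisconnectedSpace (G ⧸ N) := by
  have key : ∀ z : G ⧸ N, z ≠ 1 → ∃ C : Subgroup (G ⧸ N),
      IsClopen (C : Set (G ⧸ N)) ∧ (1 : G ⧸ N) ∈ C ∧ z ∉ C := by
    intro z hz
    obtain ⟨w, rfl⟩ := QuotientGroup.mk_surjective z
    have hwN : w ∉ N := fun hw => hz ((QuotientGroup.eq_one_iff w).mpr hw)
    have hVex : ∃ V : OpenNormalSubgroup G, w ∉ (N ⊔ V.toSubgroup) := by
      by_contra hcon
      push_neg at hcon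
      have hwcl : w ∈ closure (N : Set G) := by
        rw [mem_closure_iff_nhds]
        intro O hO
        have hO' : ((w * ·) ⁻¹' O) ∈ nhds (1 : G) := by
          have := (continuous_mul_left w).continuousAt (x := (1 : G))
          apply this.preimage_mem_nhds
          rwa [mul_one]
        obtain ⟨V, hV⟩ := exists_openNormalSubgroup_nhd hO'
        have hw : w ∈ ((N : Set G) * (V.toSubgroup : Set G)) := by
          rw [← Subgroup.mul_normal]
          exact hcon V
        obtain ⟨n, hn, v, hv, hnv⟩ := hw
        refine ⟨n, ?_, hn⟩
        have hvinv : v⁻¹ ∈ (V : Set G) := V.toSubgroup.inv_mem hv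
        have : n = w * v⁻¹ := by rw [← hnv]; group
        rw [this]
        exact hV hvinv
      rw [hN.closure_eq] at hwcl
      exact hwN hwcl
    obtain ⟨V, hV⟩ := hVex
    set M : Subgroup G := N ⊔ V.toSubgroup with hM
    have hMopen : IsOpen (M : Set G) :=
      Subgroup.isOpen_of_openSubgroup M (U := V.toOpenSubgroup) le_sup_right
    refine ⟨M.map (QuotientGroup.mk' N), ⟨?_, ?_⟩, one_mem _, ?_⟩
    · exact Subgroup.isClosed_of_isOpen _ (by
        rw [Subgroup.coe_map]
        exact QuotientGroup.isOpenMap_coe (M : Set G) hMopen)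
    · rw [Subgroup.coe_map]
      exact QuotientGroup.isOpenMap_coe (M : Set G) hMopen
    · intro hmem
      obtain ⟨m, hm, hmw⟩ := hmem
      have h1 : m⁻¹ * w ∈ N := (QuotientGroup.eq (s := N)).mp hmw
      have h2 : w ∈ M := by
        have hw : w = m * (m⁻¹ * w) := by group
        rw [hw]
        exact M.mul_mem hm (le_sup_left (a := N) (b := V.toSubgroup) h1)
      exact hV h2
  have : TotallySeparatedSpace (G ⧸ N) := by
    constructor
    intro x _ y _ hxy
    have hz : y * x⁻¹ ≠ 1 := fun h => hxy (by
      have : y = x := by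
        have := congrArg (· * x) h
        simpa [mul_assoc] using this
      exact this.symm)
    obtain ⟨C, hCclopen, hC1, hCz⟩ := key _ hz
    refine ⟨(fun c => c * x) '' (C : Set (G ⧸ N)), ((fun c => c * x) '' (C : Set (G ⧸ N)))ᶜ,
      (Homeomorph.mulRight x).isOpenMap _ hCclopen.2, ?_, ⟨1, hC1, one_mul x⟩, ?_, ?_, ?_⟩
    · exact ((Homeomorph.mulRight x).isClosedMap _ hCclopen.1).isOpen_compl
    · intro hy
      obtain ⟨c, hc, hcx⟩ := hy
      have : c = y * x⁻¹ := by rw [← hcx]; group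
      rw [this] at hc
      exact hCz hc
    · rw [Set.union_compl_self]
    · exact disjoint_compl_right
  exact TotallySeparatedSpace.totallyDisconnectedSpace _

end ProfiniteBasics

section TopGen

/-- A free profinite group is topologically generated by its letters. -/
theorem topgen {F : Type} [Group F] [TopologicalSpace F] [IsTopologicalGroup F]
    [CompactSpace F] [T2Space F] [TotallyDisconnectedSpace F] {n : ℕ} {s : Fin n → F}
    (hfree : IsFreeProfiniteOn F s) :
    (Subgroup.closure (Set.range s)).topologicalClosure = ⊤ := by
  set M := (Subgroup.closure (Set.range s)).topologicalClosure with hM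
  haveI : CompactSpace ↥M :=
    isCompact_iff_compactSpace.mp ((Subgroup.isClosed_topologicalClosure _).isCompact)
  have hmem : ∀ i, s i ∈ M := fun i =>
    Subgroup.le_topologicalClosure _ (Subgroup.subset_closure (Set.mem_range_self i))
  obtain ⟨φM, ⟨hφMc, hφMv⟩, -⟩ := hfree ↥M (fun i => ⟨s i, hmem i⟩)
  obtain ⟨θ, -, hθuniq⟩ := hfree F s
  have h1 : M.subtype.comp φM = θ := hθuniq _ ⟨continuous_subtype_val.comp hφMc, fun i => by
    simp [hφMv i]⟩
  have h2 : MonoidHom.id F = θ := hθuniq _ ⟨continuous_id, fun i => rfl⟩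
  rw [eq_top_iff]
  intro x _
  have h3 := DFunLike.congr_fun (h1.trans h2.symm) x
  have h4 : ((φM x : ↥M) : F) = x := h3
  rw [← h4]
  exact (φM x).2

end TopGen

section Construction

variable (k : ℕ)

/-- The index type: finite-index normal subgroups of the free group on `k` letters. -/
def NIdx := {N : Subgroup (FreeGroup (Fin k)) // N.Normal ∧ N.FiniteIndex}

variable {k}

private def nidxNormal (N : NIdx k) : N.1.Normal := N.2.1
private def nidxFI (N : NIdx k) : N.1.FiniteIndex := N.2.2
attribute [local instance] nidxNormal nidxFI

private def qTop (N : Subgroup (FreeGroup (Fin k))) : TopologicalSpace (FreeGroup (Fin k) ⧸ N) := ⊥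
attribute [local instance] qTop
private def qDisc (N : Subgroup (FreeGroup (Fin k))) :
    DiscreteTopology (FreeGroup (Fin k) ⧸ N) := ⟨rfl⟩
attribute [local instance] qDisc
private def qTG (N : Subgroup (FreeGroup (Fin k))) [N.Normal] :
    IsTopologicalGroup (FreeGroup (Fin k) ⧸ N) where
  continuous_mul := continuous_of_discreteTopology
  continuous_inv := continuous_of_discreteTopology
attribute [local instance] qTG
private def qFin (N : NIdx k) : Finite (FreeGroup (Fin k) ⧸ N.1) :=
  N.1.finite_quotient_of_finiteIndex
attribute [local instance] qFin

variable (k) in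
/-- The ambient product of all finite quotients. -/
abbrev PAmb := ∀ N : NIdx k, FreeGroup (Fin k) ⧸ N.1

/-- The diagonal map. -/
def delta : FreeGroup (Fin k) →* PAmb k where
  toFun γ := fun N => QuotientGroup.mk γ
  map_one' := rfl
  map_mul' _ _ := rfl

/-- The closure of the image of a subgroup of the free group. -/
def CC (S : Subgroup (FreeGroup (Fin k))) : Subgroup (PAmb k) :=
  (S.map delta).topologicalClosure

private def ccCompact (S : Subgroup (FreeGroup (Fin k))) : CompactSpace ↥(CC S) :=
  isCompact_iff_compactSpace.mp ((Subgroup.isClosed_topologicalClosure _).isCompact)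
attribute [local instance] ccCompact

theorem mem_CC (S : Subgroup (FreeGroup (Fin k))) (s : ↥S) : delta (s : FreeGroup (Fin k)) ∈ CC S :=
  Subgroup.le_topologicalClosure _ ⟨s, s.2, rfl⟩

/-- Inclusion of `S` into the closure of its image. -/
def iotaC (S : Subgroup (FreeGroup (Fin k))) : ↥S →* ↥(CC S) :=
  (delta.comp S.subtype).codRestrict _ (fun s => mem_CC S s)

theorem dense_iotaC (S : Subgroup (FreeGroup (Fin k))) :
    Dense (Set.range (iotaC S) : Set ↥(CC S)) := by
  intro e
  rw [closure_subtype]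
  have himg : Subtype.val '' (Set.range (iotaC S)) = ((S.map delta : Subgroup (PAmb k)) : Set (PAmb k)) := by
    ext y
    constructor
    · rintro ⟨-, ⟨s, rfl⟩, rfl⟩
      exact ⟨s, s.2, rfl⟩
    · rintro ⟨γ, hγ, rfl⟩
      exact ⟨iotaC S ⟨γ, hγ⟩, ⟨⟨γ, hγ⟩, rfl⟩, rfl⟩
  rw [himg, ← Subgroup.topologicalClosure_coe]
  exact e.2



theorem mainFree (S : Subgroup (FreeGroup (Fin k))) [S.FiniteIndex] {X : Type}
    (b : FreeGroupBasis X ↥S)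
    (H : Type) [Group H] [TopologicalSpace H] [IsTopologicalGroup H] [CompactSpace H]
    [T2Space H] [TotallyDisconnectedSpace H] (f : X → H) :
    ∃! h : ↥(CC S) →* H, Continuous h ∧ ∀ x, h (iotaC S (b x)) = f x := by
  classical
  set h₀ : ↥S →* H := b.lift f with hh₀
  have hlift_of : ∀ x, h₀ (b x) = f x := by
    intro x
    have h1 : h₀ (b x) = FreeGroup.lift f (b.repr (b x)) := rfl
    rw [h1, b.repr_apply_coe, FreeGroup.lift_apply_of]
  -- the embedding of H into the product of its finite quotients
  set g : H →* (∀ V : OpenNormalSubgroup H, H ⧸ V.toOpenSubgroup.toSubgroup) :=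
    { toFun := fun h V => QuotientGroup.mk h
      map_one' := rfl
      map_mul' := fun _ _ => rfl } with hg
  have hginj : Function.Injective g := by
    intro a c hac
    have h1 : ∀ V : OpenNormalSubgroup H, a⁻¹ * c ∈ V.toOpenSubgroup.toSubgroup := by
      intro V
      have := congr_fun hac V
      exact (QuotientGroup.eq (s := V.toOpenSubgroup.toSubgroup)).mp this
    have := eq_one_of_mem_all_openNormal (x := a⁻¹ * c) (fun V => h1 V)
    rw [inv_mul_eq_one] at this
    exact this
  have hgcont : Continuous g := continuous_pi (fun V => QuotientGroup.continuous_mk)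
  have hgemb : Topology.IsClosedEmbedding g := hgcont.isClosedEmbedding hginj
  -- per open normal subgroup V, a continuous multiplicative map compatible with h₀
  have hdata : ∀ V : OpenNormalSubgroup H, ∃ cV : ↥(CC S) → H ⧸ V.toOpenSubgroup.toSubgroup,
      Continuous cV ∧ (∀ e₁ e₂, cV (e₁ * e₂) = cV e₁ * cV e₂) ∧
      (∀ s : ↥S, cV (iotaC S s) = QuotientGroup.mk (h₀ s)) := by
    intro V
    set ρ : ↥S →* H ⧸ V.toOpenSubgroup.toSubgroup :=
      (QuotientGroup.mk' V.toOpenSubgroup.toSubgroup).comp h₀ with hρ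
    have hfinq : Finite (↥S ⧸ ρ.ker) :=
      Finite.of_injective _ (QuotientGroup.kerLift_injective ρ)
    haveI : ρ.ker.FiniteIndex := Subgroup.finiteIndex_of_finite_quotient
    set M' : Subgroup (FreeGroup (Fin k)) := ρ.ker.map S.subtype with hM'
    haveI hM'fi : M'.FiniteIndex := by
      constructor
      rw [← Subgroup.relIndex_mul_index (Subgroup.map_subtype_le ρ.ker)]
      apply mul_ne_zero
      · rw [Subgroup.relIndex, Subgroup.subgroupOf,
          Subgroup.comap_map_eq_self_of_injective (Subgroup.subtype_injective S)]
        exact Subgroup.FiniteIndex.index_ne_zero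
      · exact Subgroup.FiniteIndex.index_ne_zero
    set N : Subgroup (FreeGroup (Fin k)) := M'.normalCore with hN
    haveI : N.FiniteIndex := Subgroup.finiteIndex_normalCore M'
    set NI : NIdx k := ⟨N, inferInstance, inferInstance⟩ with hNI
    -- well-definedness
    have hwd : ∀ (s₁ s₂ : ↥S), QuotientGroup.mk' N (s₁ : FreeGroup (Fin k)) =
        QuotientGroup.mk' N (s₂ : FreeGroup (Fin k)) → ρ s₁ = ρ s₂ := by
      intro s₁ s₂ hmk
      have h1 : (s₁ : FreeGroup (Fin k))⁻¹ * s₂ ∈ N :=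
        (QuotientGroup.eq (s := N)).mp hmk
      have h2 : (s₁ : FreeGroup (Fin k))⁻¹ * s₂ ∈ M' := M'.normalCore_le h1
      obtain ⟨m, hm, hmeq⟩ := h2
      have h3 : s₁⁻¹ * s₂ = m := by
        apply Subtype.ext
        rw [Subgroup.coe_mul, InvMemClass.coe_inv, ← hmeq]
        rfl
      have h4 : s₁⁻¹ * s₂ ∈ ρ.ker := h3 ▸ hm
      have h5 : ρ (s₁⁻¹ * s₂) = 1 := h4
      rw [map_mul, map_inv, inv_mul_eq_one] at h5
      exact h5
    -- the transfer map on the discrete quotient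
    set q : (FreeGroup (Fin k) ⧸ N) → H ⧸ V.toOpenSubgroup.toSubgroup :=
      fun y => if h : ∃ s : ↥S, QuotientGroup.mk' N (s : FreeGroup (Fin k)) = y
        then ρ h.choose else 1 with hq
    have hq_eq : ∀ (y) (s : ↥S), QuotientGroup.mk' N (s : FreeGroup (Fin k)) = y → q y = ρ s := by
      intro y s hs
      have hex : ∃ s' : ↥S, QuotientGroup.mk' N (s' : FreeGroup (Fin k)) = y := ⟨s, hs⟩
      rw [hq]
      simp only [dif_pos hex]
      exact hwd _ _ (by rw [hex.choose_spec, hs])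
    -- every element of CC S projects into the image of S at NI
    have hmembar : ∀ e : ↥(CC S), ∃ s : ↥S,
        QuotientGroup.mk' N (s : FreeGroup (Fin k)) = (e : PAmb k) NI := by
      intro e
      have hclosed : IsClosed {p : PAmb k |
          ∃ s : ↥S, QuotientGroup.mk' N (s : FreeGroup (Fin k)) = p NI} := by
        have heq : {p : PAmb k | ∃ s : ↥S, QuotientGroup.mk' N (s : FreeGroup (Fin k)) = p NI}
            = (fun p : PAmb k => p NI) ⁻¹'
              {y | ∃ s : ↥S, QuotientGroup.mk' N (s : FreeGroup (Fin k)) = y} := rfl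
        rw [heq]
        exact (isClosed_discrete _).preimage (continuous_apply NI)
      have hsub : ((S.map delta : Subgroup (PAmb k)) : Set (PAmb k)) ⊆
          {p : PAmb k | ∃ s : ↥S, QuotientGroup.mk' N (s : FreeGroup (Fin k)) = p NI} := by
        rintro - ⟨γ, hγ, rfl⟩
        exact ⟨⟨γ, hγ⟩, rfl⟩
      have hcl := closure_minimal hsub hclosed
      apply hcl
      rw [← Subgroup.topologicalClosure_coe]
      exact e.2
    refine ⟨fun e => q ((e : PAmb k) NI), ?_, ?_, ?_⟩
    · show Continuous (q ∘ (fun e : ↥(CC S) => (e : PAmb k) NI))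
      exact Continuous.comp continuous_of_discreteTopology
        ((continuous_apply NI).comp continuous_subtype_val)
    · intro e₁ e₂
      obtain ⟨s₁, hs₁⟩ := hmembar e₁
      obtain ⟨s₂, hs₂⟩ := hmembar e₂
      have h12 : QuotientGroup.mk' N ((s₁ * s₂ : ↥S) : FreeGroup (Fin k))
          = ((e₁ * e₂ : ↥(CC S)) : PAmb k) NI := by
        rw [Subgroup.coe_mul, map_mul, hs₁, hs₂]
        rfl
      show q (((e₁ * e₂ : ↥(CC S)) : PAmb k) NI) = q ((e₁ : PAmb k) NI) * q ((e₂ : PAmb k) NI)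
      rw [hq_eq _ _ h12, hq_eq _ _ hs₁, hq_eq _ _ hs₂, map_mul]
    · intro s
      have hkey : QuotientGroup.mk' N ((s : ↥S) : FreeGroup (Fin k))
          = ((iotaC S s : ↥(CC S)) : PAmb k) NI := rfl
      show q (((iotaC S s : ↥(CC S)) : PAmb k) NI) = QuotientGroup.mk (h₀ s)
      rw [hq_eq _ _ hkey]
      rfl
  choose cV hcVcont hcVmul hcVval using hdata
  -- assemble into a monoid hom to the product
  set Θ : ↥(CC S) →* (∀ V : OpenNormalSubgroup H, H ⧸ V.toOpenSubgroup.toSubgroup) :=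
    { toFun := fun e V => cV V e
      map_one' := by
        funext V
        have := hcVval V 1
        simpa using this
      map_mul' := fun e₁ e₂ => by
        funext V
        exact hcVmul V e₁ e₂ } with hΘ
  have hΘcont : Continuous Θ := continuous_pi (fun V => hcVcont V)
  have hΘι : ∀ s : ↥S, Θ (iotaC S s) = g (h₀ s) := by
    intro s
    funext V
    exact hcVval V s
  have hrange : ∀ e : ↥(CC S), Θ e ∈ Set.range g := by
    intro e
    have hclosed : IsClosed (Θ ⁻¹' (Set.range g)) :=
      hgemb.isClosed_range.preimage hΘcont
    have hsub : Set.range (iotaC S) ⊆ Θ ⁻¹' (Set.range g) := by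
      rintro - ⟨s, rfl⟩
      exact ⟨h₀ s, (hΘι s).symm⟩
    have := closure_minimal hsub hclosed
    exact this ((dense_iotaC S) e)
  -- the lifted homomorphism
  set hfun : ↥(CC S) → H := fun e => (hrange e).choose with hhfun
  have hgh : ∀ e, g (hfun e) = Θ e := fun e => (hrange e).choose_spec
  set hhom : ↥(CC S) →* H :=
    { toFun := hfun
      map_one' := hginj (by rw [hgh, map_one, map_one])
      map_mul' := fun e₁ e₂ => hginj (by rw [hgh, map_mul, map_mul, hgh, hgh]) } with hhhom
  have hgh2 : ∀ e, g (hhom e) = Θ e := fun e => hgh e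
  have hhomcont : Continuous hhom := by
    rw [hgemb.toIsEmbedding.continuous_iff]
    have heq : g ∘ hhom = Θ := funext (fun e => hgh2 e)
    rw [heq]
    exact hΘcont
  have hhomval : ∀ s : ↥S, hhom (iotaC S s) = h₀ s := by
    intro s
    apply hginj
    rw [hgh2, hΘι]
  refine ⟨hhom, ⟨hhomcont, fun x => by rw [hhomval, hlift_of]⟩, ?_⟩
  rintro h' ⟨h'cont, h'val⟩
  have hcomp : h'.comp (iotaC S) = hhom.comp (iotaC S) := by
    apply b.ext_hom
    intro x
    simp only [MonoidHom.comp_apply]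
    rw [h'val x, hhomval, hlift_of]
  have heqon : Set.EqOn (⇑h') (⇑hhom) (Set.range (iotaC S)) := by
    rintro - ⟨s, rfl⟩
    exact DFunLike.congr_fun hcomp s
  exact MonoidHom.ext (congr_fun (Continuous.ext_on (dense_iotaC S) h'cont hhomcont heqon))


set_option maxHeartbeats 1000000 in
/-- **A profinite group with a finitely presented open subgroup is finitely presented.**
If `G` is a profinite group and `U ≤ G` is an open subgroup which is topologically finitely
presented, then `G` is topologically finitely presented. -/
theorem finitelyPresented_of_openSubgroup
    (G : Type) [Group G] [TopologicalSpace G] [IsTopologicalGroup G] [CompactSpace G]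
    [T2Space G] [TotallyDisconnectedSpace G]
    (U : Subgroup G) (hUopen : IsOpen (U : Set G))
    (hUfp : IsFinitelyPresentedProfinite U) :
    IsFinitelyPresentedProfinite G := by
  classical
  obtain ⟨FU, gFU, tFU, tgFU, hrest⟩ := hUfp
  letI := gFU; letI := tFU; letI := tgFU
  obtain ⟨hCFU, hT2FU, hTDFU, n, sU, φ, hfreeU, hφcont, hφsurj, T, hTsub, hTker⟩ := hrest
  haveI := hCFU; haveI := hT2FU; haveI := hTDFU
  -- U is itself profinite
  have hUclosed : IsClosed (U : Set G) := Subgroup.isClosed_of_isOpen U hUopen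
  haveI hUcomp : CompactSpace ↥U := isCompact_iff_compactSpace.mp hUclosed.isCompact
  -- coset representatives
  haveI : Finite (G ⧸ U) := Subgroup.quotient_finite_of_isOpen U hUopen
  obtain ⟨m, ⟨eqv⟩⟩ := Finite.exists_equiv_fin (G ⧸ U)
  set c : Fin m → G := fun j => Quotient.out (eqv.symm j) with hc
  have hcos : ∀ g : G, ∃ j : Fin m, ∃ u ∈ U, g = c j * u := by
    intro g
    refine ⟨eqv (QuotientGroup.mk g), ?_⟩
    have h1 : QuotientGroup.mk (c (eqv (QuotientGroup.mk g))) = (QuotientGroup.mk g : G ⧸ U) := by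
      rw [hc]
      simp only [Equiv.symm_apply_apply]
      exact Quotient.out_eq' _
    have h2 : (c (eqv (QuotientGroup.mk g)))⁻¹ * g ∈ U := (QuotientGroup.eq (s := U)).mp h1
    exact ⟨_, h2, by group⟩
  -- the free profinite group on n + m letters
  set bTop : FreeGroupBasis (Fin (n + m)) ↥(⊤ : Subgroup (FreeGroup (Fin (n + m)))) :=
    (FreeGroupBasis.ofFreeGroup (Fin (n + m))).map (Subgroup.topEquiv.symm) with hbTop
  set sF : Fin (n + m) → ↥(CC (⊤ : Subgroup (FreeGroup (Fin (n + m))))) :=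
    fun i => iotaC ⊤ (bTop i) with hsF
  have hfreeF : IsFreeProfiniteOn ↥(CC (⊤ : Subgroup (FreeGroup (Fin (n + m))))) sF :=
    fun H _ _ _ _ _ _ f => mainFree ⊤ bTop H f
  -- the presentation map ψ
  set fval : Fin (n + m) → G := Fin.append (fun i => ((φ (sU i) : ↥U) : G)) c with hfval
  obtain ⟨ψ, ⟨hψcont, hψval⟩, -⟩ := hfreeF G fval
  -- surjectivity of ψ
  have hrgclosed : IsClosed ((ψ.range : Subgroup G) : Set G) := by
    rw [MonoidHom.coe_range]
    exact (isCompact_range hψcont).isClosed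
  set χ : FU →* G := U.subtype.comp φ with hχ
  have hχcont : Continuous χ := continuous_subtype_val.comp hφcont
  have hχgen : Subgroup.closure (χ '' Set.range sU) ≤ ψ.range := by
    rw [Subgroup.closure_le]
    rintro - ⟨-, ⟨i, rfl⟩, rfl⟩
    refine ⟨sF (Fin.castAdd m i), ?_⟩
    rw [hψval, hfval]
    exact (Fin.append_left _ _ i)
  have hUsub : (U : Set G) ⊆ ((ψ.range : Subgroup G) : Set G) := by
    intro u hu
    obtain ⟨a, ha⟩ := hφsurj ⟨u, hu⟩
    have hatop : a ∈ (Subgroup.closure (Set.range sU)).topologicalClosure := by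
      rw [topgen hfreeU]; trivial
    rw [← SetLike.mem_coe, Subgroup.topologicalClosure_coe] at hatop
    have h1 : u ∈ closure (χ '' ((Subgroup.closure (Set.range sU) : Subgroup FU) : Set FU)) := by
      have hχa : χ a = u := by rw [hχ]; simp [ha]
      rw [← hχa]
      exact map_mem_closure hχcont hatop (Set.mapsTo_image _ _)
    have h2 : χ '' ((Subgroup.closure (Set.range sU) : Subgroup FU) : Set FU)
        = ((Subgroup.closure (χ '' Set.range sU) : Subgroup G) : Set G) := by
      rw [← MonoidHom.map_closure]
      exact (Subgroup.coe_map _ _).symm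
    rw [h2] at h1
    have h3 : closure ((Subgroup.closure (χ '' Set.range sU) : Subgroup G) : Set G)
        ⊆ closure ((ψ.range : Subgroup G) : Set G) :=
      closure_mono (SetLike.coe_subset_coe.mpr hχgen)
    have h4 := h3 h1
    rwa [hrgclosed.closure_eq] at h4
  have hψsurjective : Function.Surjective ψ := by
    intro g
    obtain ⟨jj, u, hu, rfl⟩ := hcos g
    have h1 : c jj ∈ ψ.range := ⟨sF (Fin.natAdd n jj), by rw [hψval, hfval]; exact Fin.append_right _ _ jj⟩
    have h2 : u ∈ ψ.range := hUsub hu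
    exact ψ.range.mul_mem h1 h2
  -- the dense image of the abstract free group
  set dd : FreeGroup (Fin (n + m)) →* ↥(CC (⊤ : Subgroup (FreeGroup (Fin (n + m))))) :=
    (iotaC ⊤).comp (Subgroup.topEquiv.symm.toMonoidHom) with hdd
  have hdddense : Dense (Set.range dd : Set ↥(CC (⊤ : Subgroup (FreeGroup (Fin (n + m)))))) := by
    have hre : Set.range dd = Set.range (iotaC (⊤ : Subgroup (FreeGroup (Fin (n + m))))) := by
      ext y
      constructor
      · rintro ⟨γ, rfl⟩; exact ⟨Subgroup.topEquiv.symm γ, rfl⟩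
      · rintro ⟨s, rfl⟩
        exact ⟨Subgroup.topEquiv s, by rw [hdd]; exact congrArg (iotaC ⊤) (Subtype.ext rfl)⟩
    rw [hre]
    exact dense_iotaC ⊤
  -- the subgroup S_E of the abstract free group and the open subgroup E_F = ψ⁻¹(U)
  set SE : Subgroup (FreeGroup (Fin (n + m))) := (U.comap ψ).comap dd with hSE
  -- identification of the closure of SE with ψ⁻¹(U)
  have himgpre : Subtype.val '' (Subtype.val ⁻¹'
        ((SE.map delta : Subgroup (PAmb (n + m))) : Set (PAmb (n + m)))
        : Set ↥(CC (⊤ : Subgroup (FreeGroup (Fin (n + m))))))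
      = ((SE.map delta : Subgroup (PAmb (n + m))) : Set (PAmb (n + m))) := by
    apply Set.image_preimage_eq_of_subset
    rintro - ⟨γ, hγ, rfl⟩
    rw [Subtype.range_coe]
    exact mem_CC ⊤ ⟨γ, trivial⟩
  have hCCsub : ∀ x : ↥(CC (⊤ : Subgroup (FreeGroup (Fin (n + m))))),
      (x : PAmb (n + m)) ∈ CC SE → ψ x ∈ U := by
    intro x hx
    have hx' : (x : PAmb (n + m)) ∈ closure ((SE.map delta : Subgroup (PAmb (n + m))) : Set (PAmb (n + m))) := by
      rw [← Subgroup.topologicalClosure_coe]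
      exact hx
    have hxcl : x ∈ closure (Subtype.val ⁻¹'
        ((SE.map delta : Subgroup (PAmb (n + m))) : Set (PAmb (n + m)))
        : Set ↥(CC (⊤ : Subgroup (FreeGroup (Fin (n + m)))))) := by
      rw [closure_subtype, himgpre]
      exact hx'
    have hsub : (Subtype.val ⁻¹' ((SE.map delta : Subgroup (PAmb (n + m))) : Set (PAmb (n + m)))
        : Set ↥(CC (⊤ : Subgroup (FreeGroup (Fin (n + m)))))) ⊆ ψ ⁻¹' (U : Set G) := by
      intro z hz
      obtain ⟨γ, hγ, hγeq⟩ := hz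
      have hzeq : z = dd γ := Subtype.ext (by rw [← hγeq]; rfl)
      rw [Set.mem_preimage, hzeq]
      exact Subgroup.mem_comap.mp (Subgroup.mem_comap.mp hγ)
    exact closure_minimal hsub (hUclosed.preimage hψcont) hxcl
  have hCCsup : ∀ x : ↥(CC (⊤ : Subgroup (FreeGroup (Fin (n + m))))),
      ψ x ∈ U → (x : PAmb (n + m)) ∈ CC SE := by
    intro x hx
    have hEopen : IsOpen (ψ ⁻¹' (U : Set G) :
        Set ↥(CC (⊤ : Subgroup (FreeGroup (Fin (n + m)))))) := hUopen.preimage hψcont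
    have hxcl : x ∈ closure (Subtype.val ⁻¹'
        ((SE.map delta : Subgroup (PAmb (n + m))) : Set (PAmb (n + m)))
        : Set ↥(CC (⊤ : Subgroup (FreeGroup (Fin (n + m)))))) := by
      rw [mem_closure_iff_nhds]
      intro O hO
      have hO' : O ∩ (ψ ⁻¹' (U : Set G)) ∈ nhds x := Filter.inter_mem hO (hEopen.mem_nhds hx)
      obtain ⟨y, hy⟩ := mem_closure_iff_nhds.mp (hdddense x) _ hO'
      obtain ⟨γ, rfl⟩ := hy.2
      refine ⟨dd γ, hy.1.1, ?_⟩
      exact ⟨γ, Subgroup.mem_comap.mpr (Subgroup.mem_comap.mpr hy.1.2), rfl⟩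
    have h1 := closure_subtype.mp hxcl
    rw [himgpre] at h1
    show (x : PAmb (n + m)) ∈ (((SE.map delta).topologicalClosure : Subgroup (PAmb (n + m)))
      : Set (PAmb (n + m)))
    rw [Subgroup.topologicalClosure_coe (s := SE.map delta)]
    exact h1
  -- the inclusion of the closure of SE into the big group
  have jle : CC SE ≤ CC (⊤ : Subgroup (FreeGroup (Fin (n + m)))) :=
    Subgroup.topologicalClosure_minimal _
      (le_trans (Subgroup.map_mono le_top) (Subgroup.le_topologicalClosure _))
      (Subgroup.isClosed_topologicalClosure _)
  set j : ↥(CC SE) →* ↥(CC (⊤ : Subgroup (FreeGroup (Fin (n + m))))) :=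
    Subgroup.inclusion jle with hj
  have hjcont : Continuous j := continuous_subtype_val.subtype_mk _
  have hjU : ∀ e : ↥(CC SE), ψ (j e) ∈ U := fun e => hCCsub (j e) e.2
  set ψ' : ↥(CC SE) →* ↥U := (ψ.comp j).codRestrict U hjU with hψ'
  have hψ'cont : Continuous ψ' := Continuous.subtype_mk (hψcont.comp hjcont) _
  have hψ'surj : Function.Surjective ψ' := by
    rintro ⟨u, hu⟩
    obtain ⟨x, hx⟩ := hψsurjective u
    have hxU : ψ x ∈ U := by rw [hx]; exact hu
    refine ⟨⟨(x : PAmb (n + m)), hCCsup x hxU⟩, ?_⟩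
    apply Subtype.ext
    show ψ (j ⟨(x : PAmb (n + m)), hCCsup x hxU⟩) = u
    have hjx : j ⟨(x : PAmb (n + m)), hCCsup x hxU⟩ = x := Subtype.ext rfl
    rw [hjx, hx]
  -- SE has finite index
  haveI : Finite (↥(CC (⊤ : Subgroup (FreeGroup (Fin (n + m))))) ⧸ (U.comap ψ)) := by
    apply Subgroup.quotient_finite_of_isOpen
    rw [Subgroup.coe_comap]
    exact hUopen.preimage hψcont
  haveI : Finite (FreeGroup (Fin (n + m)) ⧸ SE) := by
    have hinj : Function.Injective (fun q : FreeGroup (Fin (n + m)) ⧸ SE =>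
        Quotient.liftOn' q (fun γ => (QuotientGroup.mk (dd γ) :
            ↥(CC (⊤ : Subgroup (FreeGroup (Fin (n + m))))) ⧸ (U.comap ψ)))
          (fun a b hab => by
            rw [QuotientGroup.leftRel_apply] at hab
            apply (QuotientGroup.eq (s := U.comap ψ)).mpr
            rw [← map_inv, ← map_mul]
            exact hab)) := by
      intro q₁ q₂
      induction q₁ using Quotient.inductionOn' with
      | h a =>
      induction q₂ using Quotient.inductionOn' with
      | h b =>
      intro h
      apply Quotient.sound'
      rw [QuotientGroup.leftRel_apply]
      have h2 := (QuotientGroup.eq (s := U.comap ψ)).mp h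
      rw [← map_inv, ← map_mul] at h2
      exact h2
    exact Finite.of_injective _ hinj
  haveI : SE.FiniteIndex := Subgroup.finiteIndex_of_finite_quotient
  -- SE is a free group (Nielsen–Schreier)
  set bE : FreeGroupBasis (IsFreeGroup.Generators ↥SE) ↥SE := IsFreeGroup.basis ↥SE with hbE
  -- the lift α : closure SE → FU
  have hat : ∀ x : IsFreeGroup.Generators ↥SE, ∃ a : FU, φ a = ψ' (iotaC SE (bE x)) :=
    fun x => hφsurj _
  choose aMap haMap using hat
  obtain ⟨α, ⟨hαcont, hαval⟩, -⟩ := mainFree SE bE FU aMap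
  have hφα : φ.comp α = ψ' := by
    have hcomp : (φ.comp α).comp (iotaC SE) = ψ'.comp (iotaC SE) := by
      apply bE.ext_hom
      intro x
      simp only [MonoidHom.comp_apply]
      rw [hαval x, haMap x]
    have heqon : Set.EqOn (⇑(φ.comp α)) (⇑ψ') (Set.range (iotaC SE)) := by
      rintro - ⟨s, rfl⟩
      exact DFunLike.congr_fun hcomp s
    exact MonoidHom.ext (congr_fun (Continuous.ext_on (dense_iotaC SE)
      (hφcont.comp hαcont) hψ'cont heqon))
  -- the lift β : FU → closure SE
  have het : ∀ i : Fin n, ∃ e : ↥(CC SE), ψ' e = φ (sU i) := fun i => hψ'surj _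
  choose eMap heMap using het
  obtain ⟨β, ⟨hβcont, hβval⟩, -⟩ := hfreeU ↥(CC SE) eMap
  have hψ'β : ψ'.comp β = φ := by
    obtain ⟨θ, -, hθuniq⟩ := hfreeU ↥U (fun i => φ (sU i))
    have h1 : ψ'.comp β = θ := hθuniq _ ⟨hψ'cont.comp hβcont, fun i => by
      simp only [MonoidHom.comp_apply]
      rw [hβval i, heMap i]⟩
    have h2 : φ = θ := hθuniq _ ⟨hφcont, fun i => rfl⟩
    rw [h1, h2]
  -- a finite dense generating set of closure SE
  haveI : Group.FG (FreeGroup (Fin (n + m))) := by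
    rw [Group.fg_iff]
    exact ⟨Set.range FreeGroup.of, FreeGroup.closure_range_of _, Set.finite_range _⟩
  haveI : Group.FG ↥SE := Subgroup.fg_of_index_ne_zero SE
  obtain ⟨TS, hTS⟩ : ∃ TS : Finset ↥SE, Subgroup.closure (TS : Set ↥SE) = ⊤ :=
    Group.fg_def.mp ‹Group.FG ↥SE›
  set D : Finset ↥(CC SE) := TS.image (iotaC SE) with hD
  have hDgen : Subgroup.closure (D : Set ↥(CC SE)) = (iotaC SE).range := by
    rw [hD, Finset.coe_image, ← MonoidHom.map_closure, hTS, ← MonoidHom.range_eq_map]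
  have hDdense : Dense ((Subgroup.closure (D : Set ↥(CC SE))) : Set ↥(CC SE)) := by
    rw [hDgen]
    rw [MonoidHom.coe_range]
    exact dense_iotaC SE
  -- the relator set in closure SE
  set T2f : Finset ↥(CC SE) := T.image β ∪ D.image (fun d => d * (β (α d))⁻¹) with hT2f
  have hT2K : (T2f : Set ↥(CC SE)) ⊆ (ψ'.ker : Set ↥(CC SE)) := by
    intro t ht
    rw [hT2f, Finset.coe_union, Set.mem_union] at ht
    rcases ht with ht | ht
    · obtain ⟨t₀, ht₀, rfl⟩ := Finset.mem_image.mp (Finset.mem_coe.mp ht)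
      have h1 : t₀ ∈ φ.ker := hTsub ht₀
      show β t₀ ∈ ψ'.ker
      rw [MonoidHom.mem_ker, ← MonoidHom.comp_apply, hψ'β]
      exact h1
    · obtain ⟨d, hd, rfl⟩ := Finset.mem_image.mp (Finset.mem_coe.mp ht)
      show d * (β (α d))⁻¹ ∈ ψ'.ker
      rw [MonoidHom.mem_ker, map_mul, map_inv]
      have h1 : ψ' (β (α d)) = φ (α d) := DFunLike.congr_fun hψ'β (α d)
      have h2 : φ (α d) = ψ' d := DFunLike.congr_fun hφα d
      rw [h1, h2, mul_inv_cancel]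
  set NE : Subgroup ↥(CC SE) := (Subgroup.normalClosure (T2f : Set ↥(CC SE))).topologicalClosure
    with hNE
  haveI hNEnormal : NE.Normal := Subgroup.is_normal_topologicalClosure _
  haveI hNEclosed : IsClosed (NE : Set ↥(CC SE)) := Subgroup.isClosed_topologicalClosure _
  have hkerclosed : IsClosed (ψ'.ker : Set ↥(CC SE)) := by
    have hk : (ψ'.ker : Set ↥(CC SE)) = ψ' ⁻¹' {1} := by
      ext z
      simp [MonoidHom.mem_ker]
    rw [hk]
    exact isClosed_singleton.preimage hψ'cont
  have hNEle : NE ≤ ψ'.ker :=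
    Subgroup.topologicalClosure_minimal _ (Subgroup.normalClosure_le_normal hT2K) hkerclosed
  -- quotient by NE is profinite
  haveI hQtd : TotallyDisconnectedSpace (↥(CC SE) ⧸ NE) :=
    quotient_totallyDisconnected NE hNEclosed
  set bb : FU →* (↥(CC SE) ⧸ NE) := (QuotientGroup.mk' NE).comp β with hbb
  have hbbcont : Continuous bb := QuotientGroup.continuous_mk.comp hβcont
  have hbbker : IsClosed (bb.ker : Set FU) := by
    have hk : (bb.ker : Set FU) = bb ⁻¹' {1} := by
      ext z
      simp [MonoidHom.mem_ker]
    rw [hk]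
    exact isClosed_singleton.preimage hbbcont
  have hkerφ_bb : φ.ker ≤ bb.ker := by
    rw [← hTker]
    apply Subgroup.topologicalClosure_minimal
    · apply Subgroup.normalClosure_le_normal
      intro t ht
      rw [SetLike.mem_coe, MonoidHom.mem_ker, hbb, MonoidHom.comp_apply,
        QuotientGroup.mk'_apply, QuotientGroup.eq_one_iff]
      refine Subgroup.le_topologicalClosure _ (Subgroup.subset_normalClosure ?_)
      rw [hT2f, Finset.coe_union]
      exact Set.mem_union_left _ (Finset.mem_coe.mpr (Finset.mem_image_of_mem β ht))
    · exact hbbker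
  -- factor bb through φ
  have hfac : ∀ (a b : FU), φ a = φ b → bb a = bb b := by
    intro a b hab
    have h1 : a⁻¹ * b ∈ φ.ker := by
      rw [MonoidHom.mem_ker, map_mul, map_inv, hab, inv_mul_cancel]
    have h2 := hkerφ_bb h1
    rw [MonoidHom.mem_ker, map_mul, map_inv, inv_mul_eq_one] at h2
    exact h2
  have hpre : ∀ u : ↥U, ∃ a : FU, φ a = u := hφsurj
  have hubar_eq : ∀ (u : ↥U) (a : FU), φ a = u → bb a = bb (hpre u).choose := by
    intro u a ha
    exact hfac a _ (by rw [ha, (hpre u).choose_spec])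
  set uhom : ↥U →* (↥(CC SE) ⧸ NE) :=
    { toFun := fun u => bb (hpre u).choose
      map_one' := by
        show bb (hpre 1).choose = 1
        rw [← hubar_eq 1 1 (map_one φ), map_one]
      map_mul' := fun u v => by
        show bb (hpre (u * v)).choose = bb (hpre u).choose * bb (hpre v).choose
        obtain ⟨a, ha⟩ := hpre u
        obtain ⟨b, hb⟩ := hpre v
        rw [← hubar_eq u a ha, ← hubar_eq v b hb,
          ← hubar_eq (u * v) (a * b) (by rw [map_mul, ha, hb]), map_mul] } with huhom
  have huhom_eq : ∀ (u : ↥U) (a : FU), φ a = u → uhom u = bb a :=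
    fun u a ha => (hubar_eq u a ha).symm
  have hφqm : IsQuotientMap (⇑φ) := (hφcont.isClosedMap).isQuotientMap hφcont hφsurj
  have huhomcont : Continuous uhom := by
    rw [hφqm.continuous_iff]
    have hcomp : (⇑uhom) ∘ (⇑φ) = ⇑bb := funext (fun a => (hubar_eq (φ a) a rfl).symm ▸ rfl)
    rw [hcomp]
    exact hbbcont
  -- the quotient map agrees with uhom ∘ ψ'
  have hmkeq : ∀ e : ↥(CC SE), QuotientGroup.mk' NE e = uhom (ψ' e) := by
    have hle : Subgroup.closure (D : Set ↥(CC SE)) ≤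
        (QuotientGroup.mk' NE).eqLocus (uhom.comp ψ') := by
      rw [Subgroup.closure_le]
      intro d hd
      show QuotientGroup.mk' NE d = uhom (ψ' d)
      have h1 : uhom (ψ' d) = bb (α d) := huhom_eq (ψ' d) (α d) (DFunLike.congr_fun hφα d)
      rw [h1, hbb, MonoidHom.comp_apply, QuotientGroup.mk'_apply, QuotientGroup.mk'_apply]
      rw [QuotientGroup.eq]
      have hmem : d * (β (α d))⁻¹ ∈ NE := by
        refine Subgroup.le_topologicalClosure _ (Subgroup.subset_normalClosure ?_)
        rw [hT2f, Finset.coe_union]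
        exact Set.mem_union_right _ (Finset.mem_coe.mpr (Finset.mem_image_of_mem _ hd))
      have hconj := hNEnormal.conj_mem _ hmem d⁻¹
      have hinv := NE.inv_mem hconj
      have hrw : (d⁻¹ * (d * (β (α d))⁻¹) * d⁻¹⁻¹)⁻¹ = d⁻¹ * β (α d) := by group
      rwa [hrw] at hinv
    have heqon : Set.EqOn (⇑(QuotientGroup.mk' NE)) (⇑(uhom.comp ψ'))
        ((Subgroup.closure (D : Set ↥(CC SE))) : Set ↥(CC SE)) := fun z hz => hle hz
    have hext := Continuous.ext_on hDdense QuotientGroup.continuous_mk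
      (huhomcont.comp hψ'cont) heqon
    exact fun e => congr_fun hext e
  have hKle : ψ'.ker ≤ NE := by
    intro z hz
    have h1 : QuotientGroup.mk' NE z = 1 := by
      rw [hmkeq z]
      have : ψ' z = 1 := hz
      rw [this, map_one]
    rw [QuotientGroup.mk'_apply] at h1
    exact (QuotientGroup.eq_one_iff z).mp h1
  have hKNE : ψ'.ker = NE := le_antisymm hKle hNEle
  -- transfer the relators to the big free profinite group
  set T3f : Finset ↥(CC (⊤ : Subgroup (FreeGroup (Fin (n + m))))) := T2f.image j with hT3f
  have hkerψclosed : IsClosed (ψ.ker : Set ↥(CC (⊤ : Subgroup (FreeGroup (Fin (n + m)))))) := by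
    have hk : (ψ.ker : Set _) = ψ ⁻¹' {1} := by
      ext z
      simp [MonoidHom.mem_ker]
    rw [hk]
    exact isClosed_singleton.preimage hψcont
  have hT3sub : (T3f : Set ↥(CC (⊤ : Subgroup (FreeGroup (Fin (n + m)))))) ⊆
      (ψ.ker : Set ↥(CC (⊤ : Subgroup (FreeGroup (Fin (n + m)))))) := by
    intro t ht
    rw [hT3f, Finset.coe_image] at ht
    obtain ⟨t₀, ht₀, rfl⟩ := ht
    have h1 : t₀ ∈ ψ'.ker := hT2K ht₀
    show j t₀ ∈ ψ.ker
    rw [MonoidHom.mem_ker]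
    have h2 : (ψ' t₀ : G) = ψ (j t₀) := rfl
    rw [MonoidHom.mem_ker] at h1
    rw [← h2, h1]
    rfl
  have hT3ker : (Subgroup.normalClosure
        (T3f : Set ↥(CC (⊤ : Subgroup (FreeGroup (Fin (n + m))))))).topologicalClosure = ψ.ker := by
    apply le_antisymm
    · exact Subgroup.topologicalClosure_minimal _
        (Subgroup.normalClosure_le_normal hT3sub) hkerψclosed
    · intro x hx
      have hx1 : ψ x = 1 := hx
      have hxU : ψ x ∈ U := by rw [hx1]; exact one_mem U
      have hxCC : (x : PAmb (n + m)) ∈ CC SE := hCCsup x hxU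
      have hje : j ⟨(x : PAmb (n + m)), hxCC⟩ = x := Subtype.ext rfl
      have heK : (⟨(x : PAmb (n + m)), hxCC⟩ : ↥(CC SE)) ∈ ψ'.ker := by
        rw [MonoidHom.mem_ker]
        apply Subtype.ext
        show ψ (j ⟨(x : PAmb (n + m)), hxCC⟩) = ((1 : ↥U) : G)
        rw [hje, hx1]
        rfl
      rw [hKNE] at heK
      haveI : ((Subgroup.normalClosure
          (T3f : Set ↥(CC (⊤ : Subgroup (FreeGroup (Fin (n + m))))))).comap j).Normal :=
        Subgroup.Normal.comap (Subgroup.normalClosure_normal) j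
      have hmapsto : Set.MapsTo (⇑j)
          ((Subgroup.normalClosure (T2f : Set ↥(CC SE))) : Set ↥(CC SE))
          ((Subgroup.normalClosure (T3f : Set ↥(CC (⊤ : Subgroup (FreeGroup (Fin (n + m)))))))
            : Set ↥(CC (⊤ : Subgroup (FreeGroup (Fin (n + m)))))) := by
        intro a ha
        have hle2 : Subgroup.normalClosure (T2f : Set ↥(CC SE)) ≤
            (Subgroup.normalClosure
              (T3f : Set ↥(CC (⊤ : Subgroup (FreeGroup (Fin (n + m))))))).comap j := by
          apply Subgroup.normalClosure_le_normal
          intro t ht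
          refine Subgroup.mem_comap.mpr (Subgroup.subset_normalClosure ?_)
          rw [hT3f, Finset.coe_image]
          exact Set.mem_image_of_mem _ ht
        exact Subgroup.mem_comap.mp (hle2 ha)
      have hecl : (⟨(x : PAmb (n + m)), hxCC⟩ : ↥(CC SE)) ∈
          closure ((Subgroup.normalClosure (T2f : Set ↥(CC SE))) : Set ↥(CC SE)) := by
        rw [← Subgroup.topologicalClosure_coe]
        exact heK
      have hfin := map_mem_closure hjcont hecl hmapsto
      rw [hje] at hfin
      rw [← SetLike.mem_coe, Subgroup.topologicalClosure_coe]
      exact hfin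
  -- assemble the presentation of G
  exact ⟨↥(CC (⊤ : Subgroup (FreeGroup (Fin (n + m))))), inferInstance, inferInstance,
    inferInstance, inferInstance, inferInstance, inferInstance, n + m, sF, ψ, hfreeF,
    hψcont, hψsurjective, T3f, hT3sub, hT3ker⟩

end Construction
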